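/- arXiv:2209.02770 — 10 statements merged into one kernel-verified Lean document; each statement's English description precedes it below -/
import Mathlib

section
/- Let A be a flexible not-necessarily-unital, not-necessarily-associative ring. Then for all a, b, c in A: (a∘b)∘c - a∘(b∘c) = 4(a,b,c) - J(a,b,c) - [[a,c],b], where ∘ is the circle product x∘y = x*y + y*x. -/
/-- The associator `(x,y,z) = (x*y)*z - x*(y*z)`. -/
def assoc {A : Type*} [NonUnitalNonAssocRing A] (x y z : A) : A :=
  x * y * z - x * (y * z)

/-- The commutator `[x,y] = x*y - y*x`. -/
def brk {A : Type*} [NonUnitalNonAssocRing A] (x y : A) : A :=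
  x * y - y * x

/-- The circle product `x∘y = x*y + y*x`. -/
def circ {A : Type*} [NonUnitalNonAssocRing A] (x y : A) : A :=
  x * y + y * x

/-- The Jacobian `J(a,b,c) = [[a,b],c] + [[b,c],a] + [[c,a],b]`. -/
def jac {A : Type*} [NonUnitalNonAssocRing A] (a b c : A) : A :=
  brk (brk a b) c + brk (brk b c) a + brk (brk c a) b

/-- In a flexible ring, the associator of the circle product equals
`4(a,b,c) - J(a,b,c) - [[a,c],b]`. -/
theorem circ_assoc_eq_of_flexible {A : Type*} [NonUnitalNonAssocRing A]
    (hflex : ∀ x y : A, assoc x y x = 0) (a b c : A) :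
    circ (circ a b) c - circ a (circ b c) =
      4 • assoc a b c - jac a b c - brk (brk a c) b := by
  have h : assoc a b c + assoc c b a = 0 := by
    have key : assoc a b c + assoc c b a =
        assoc (a + c) b (a + c) - assoc a b a - assoc c b c := by
      simp only [assoc, add_mul, mul_add]
      abel
    rw [key, hflex, hflex, hflex]
    abel
  have expand : circ (circ a b) c - circ a (circ b c) =
      (4 • assoc a b c - jac a b c - brk (brk a c) b) -
        2 • (assoc a b c + assoc c b a) := by
    simp only [assoc, circ, brk, jac, mul_add, add_mul, sub_mul, mul_sub]
    abel
  rw [expand, h, smul_zero, sub_zero]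
end

section
/- (Proposition 3.0) Let A be a flexible not-necessarily-unital, not-necessarily-associative ring. Then the circle product x∘y = x*y + y*x is associative (i.e. (a∘b)∘c = a∘(b∘c) for all a,b,c) if and only if A satisfies the Kokoris identity J(a,b,c) = 4(a,b,c) - [[a,c],b] for all a, b, c in A. -/
/-- Linearized flexibility: `(x,y,z) + (z,y,x) = 0`. -/
lemma flex_linear {A : Type*} [NonUnitalNonAssocRing A]
    (hflex : ∀ x y : A, assoc x y x = 0) (x y z : A) :
    assoc x y z + assoc z y x = 0 := by
  have key : assoc x y z + assoc z y x
      = assoc (x + z) y (x + z) - assoc x y x - assoc z y z := by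
    simp only [assoc, add_mul, mul_add]
    abel
  rw [key, hflex, hflex, hflex]
  simp

/-- The key polynomial identity relating the two sides. -/
lemma key_identity {A : Type*} [NonUnitalNonAssocRing A] (a b c : A) :
    circ (circ a b) c - circ a (circ b c)
      = (4 • assoc a b c - brk (brk a c) b) - jac a b c
        - 2 • (assoc a b c + assoc c b a) := by
  simp only [circ, assoc, brk, jac, mul_add, add_mul, mul_sub, sub_mul]
  abel

/-- Proposition 3.0: in a flexible ring, the circle product is associative
if and only if the Kokoris identity `J(a,b,c) = 4(a,b,c) - [[a,c],b]` holds. -/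
theorem circ_assoc_iff_kokoris {A : Type*} [NonUnitalNonAssocRing A]
    (hflex : ∀ x y : A, assoc x y x = 0) :
    (∀ a b c : A, circ (circ a b) c = circ a (circ b c)) ↔
      (∀ a b c : A, jac a b c = 4 • assoc a b c - brk (brk a c) b) := by
  have key2 : ∀ a b c : A, circ (circ a b) c - circ a (circ b c)
      = (4 • assoc a b c - brk (brk a c) b) - jac a b c := by
    intro a b c
    rw [key_identity a b c, flex_linear hflex a b c]
    simp
  constructor
  · intro h a b c
    have h0 : (4 • assoc a b c - brk (brk a c) b) - jac a b c = 0 := by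
      rw [← key2 a b c, h a b c, sub_self]
    exact (sub_eq_zero.mp h0).symm
  · intro h a b c
    have h0 := key2 a b c
    rw [← h a b c, sub_self] at h0
    exact sub_eq_zero.mp h0
end

section
/- Let F be a field and A a unital not-necessarily-associative F-algebra that is flexible and quadratic over F, meaning that for every a in A there exist scalars t, n in F with a*a = t•a - n•1. Then A satisfies the Jordan identity: ((x*x)*y)*x = (x*x)*(y*x) for all x, y in A. (Every quadratic flexible algebra is a noncommutative Jordan algebra.) -/
/-- Every quadratic flexible algebra satisfies the Jordan identity,
i.e. is a noncommutative Jordan algebra. -/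
theorem jordan_of_quadratic_flexible {F A : Type*} [Field F] [NonAssocRing A]
    [Module F A] [SMulCommClass F A A] [IsScalarTower F A A]
    (hflex : ∀ x y : A, x * y * x = x * (y * x))
    (hquad : ∀ a : A, ∃ t n : F, a * a = t • a - n • (1 : A)) :
    ∀ x y : A, x * x * y * x = x * x * (y * x) := by
  intro x y
  obtain ⟨t, n, h⟩ := hquad x
  rw [h]
  simp [sub_mul, smul_mul_assoc, hflex]
end

section
/- Let F be a commutative ring, B an associative unital F-algebra, and λ an element of F. Define on B the mutated product x*y := λ•(x·y) + (1-λ)•(y·x). Then the product * is flexible, (x*y)*x = x*(y*x) for all x, y, and * satisfies the Jordan identity ((x*x)*y)*x = (x*x)*(y*x) for all x, y. (Every quasi-associative algebra B(λ) is a noncommutative Jordan algebra.) -/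
/-- Every quasi-associative algebra `B(λ)`, i.e. an associative algebra `B`
with the mutated product `x*y = λ•(x·y) + (1-λ)•(y·x)`, is flexible and
satisfies the Jordan identity: it is a noncommutative Jordan algebra. -/
theorem mutation_flexible_and_jordan {F B : Type*} [CommRing F] [Ring B] [Algebra F B]
    (l : F) (star : B → B → B)
    (hstar : ∀ x y : B, star x y = l • (x * y) + (1 - l) • (y * x)) :
    (∀ x y : B, star (star x y) x = star x (star y x)) ∧
    (∀ x y : B, star (star (star x x) y) x = star (star x x) (star y x)) := by
  constructor <;> intro x y <;>
    simp only [hstar, smul_add, mul_add, add_mul, smul_mul_assoc, mul_smul_comm, smul_smul,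
      mul_assoc] <;> module
end

section
/- Let R be a commutative ring, A a commutative associative R-algebra, and β : A →ₗ[R] A →ₗ[R] A a bilinear bracket satisfying anticommutativity β(a,b) = -β(b,a) and the Leibniz identity β(a·b, c) = a·β(b,c) + b·β(a,c), i.e. (A, ·, β) is a generic Poisson algebra. Define the product a*b := a·b + β(a,b). Then: (i) * is flexible: (a*b)*a = a*(b*a) for all a, b; (ii) a*b + b*a = 2(a·b) for all a, b, so the circle product of * is associative; (iii) * satisfies the Kokoris identity J_*(a,b,c) = 4(a,b,c)_* - [[a,c]_*,b]_* for all a, b, c, where the associator, commutator and J are formed with the product *. (A generic Poisson algebra gives rise to a Kokoris algebra.) -/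
/-- The associator of a binary product `star`. -/
def sassoc {A : Type*} [Sub A] (star : A → A → A) (x y z : A) : A :=
  star (star x y) z - star x (star y z)

/-- The commutator of a binary product `star`. -/
def scomm {A : Type*} [Sub A] (star : A → A → A) (x y : A) : A :=
  star x y - star y x

/-- The Jacobian `J_*(a,b,c) = [[a,b]_*,c]_* + [[b,c]_*,a]_* + [[c,a]_*,b]_*`. -/
def sjac {A : Type*} [Add A] [Sub A] (star : A → A → A) (a b c : A) : A :=
  scomm star (scomm star a b) c + scomm star (scomm star b c) a
    + scomm star (scomm star c a) b

/-- A generic Poisson algebra `(A, ·, β)` gives rise to a Kokoris algebra via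
`a*b = a·b + β(a,b)`: the product `*` is flexible, its circle product is twice
the commutative associative product, and the Kokoris identity holds. -/
theorem genericPoisson_gives_kokoris {R A : Type*} [CommRing R] [CommRing A] [Algebra R A]
    (β : A →ₗ[R] A →ₗ[R] A)
    (hanti : ∀ a b : A, β a b = - β b a)
    (hleib : ∀ a b c : A, β (a * b) c = a * β b c + b * β a c)
    (star : A → A → A) (hstar : ∀ a b : A, star a b = a * b + β a b) :
    (∀ a b : A, star (star a b) a = star a (star b a)) ∧
    (∀ a b : A, star a b + star b a = 2 * (a * b)) ∧
    (∀ a b c : A,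
      sjac star a b c = 4 • sassoc star a b c - scomm star (scomm star a c) b) := by
  have hswap : ∀ x y z : A, β (β x y) z = - β (β y x) z := by
    intro x y z
    rw [hanti x y]
    simp
  have hcomm : ∀ x y : A, scomm star x y = β x y - β y x := by
    intro x y
    simp only [scomm, hstar]
    ring
  have hassoc : ∀ x y z : A, sassoc star x y z = β (β x y) z + β (β y z) x := by
    intro x y z
    simp only [sassoc, hstar, map_add, LinearMap.add_apply]
    linear_combination hleib x y z - hanti x (y*z) + hleib y z x + z * hanti x y
      + y * hanti x z - hanti x (β y z)
  have hcomm2 : ∀ x y z : A, scomm star (scomm star x y) z = 4 * β (β x y) z := by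
    intro x y z
    rw [hcomm, hcomm, map_sub, LinearMap.sub_apply, map_sub]
    linear_combination -2 * hswap x y z - hanti (β x y) z + hanti z (β y x)
  refine ⟨?_, ?_, ?_⟩
  · intro a b
    have h1 := hassoc a b a
    have h2 : β (β b a) a = - β (β a b) a := hswap b a a
    have h3 : sassoc star a b a = 0 := by rw [h1, h2]; ring
    unfold sassoc at h3
    exact sub_eq_zero.mp h3
  · intro a b
    rw [hstar, hstar]
    linear_combination hanti a b
  · intro a b c
    simp only [sjac, hcomm2, hassoc, nsmul_eq_mul, Nat.cast_ofNat]
    linear_combination 4 * hswap c a b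
end

section
/- Let A be a not-necessarily-unital, not-necessarily-associative ring that is a ℚ-algebra (i.e. a module over ℚ with scalar multiplication compatible with ring multiplication). If A is flexible and the circle product x∘y = x*y + y*x is associative, then A satisfies the Jordan identity ((x*x)*y)*x = (x*x)*(y*x) for all x, y. (A Kokoris algebra over a field of characteristic 0 is a noncommutative Jordan algebra.) -/
/-- A Kokoris algebra over a field of characteristic 0 is a noncommutative
Jordan algebra: if `A` is a flexible ℚ-algebra whose circle product is
associative, then `A` satisfies the Jordan identity. -/
theorem jordan_of_flexible_circAssoc {A : Type*} [NonUnitalNonAssocRing A]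
    [Module ℚ A] [SMulCommClass ℚ A A] [IsScalarTower ℚ A A]
    (hflex : ∀ x y : A, x * y * x = x * (y * x))
    (hcirc : ∀ a b c : A, circ (circ a b) c = circ a (circ b c)) :
    ∀ x y : A, x * x * y * x = x * x * (y * x) := by
  intro x y
  -- linearized flexibility
  have hF : ∀ a b c : A, a * b * c + c * b * a = a * (b * c) + c * (b * a) := by
    intro a b c
    have h := hflex (a + c) b
    have h1 := hflex a b
    have h2 := hflex c b
    simp only [add_mul, mul_add] at h
    linear_combination (norm := abel) h - h1 - h2
  -- expanded circle associativity
  have hE : ∀ a b c : A, a * b * c + b * a * c + c * (a * b) + c * (b * a)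
      = a * (b * c) + a * (c * b) + b * c * a + c * b * a := by
    intro a b c
    have h := hcirc a b c
    simp only [circ, add_mul, mul_add] at h
    linear_combination (norm := abel) h
  -- instances multiplied by x on the left/right
  have hFL1 := congrArg (fun t => x * t) (hF x x y)
  have hFR1 := congrArg (fun t => t * x) (hF x x y)
  have hEL1 := congrArg (fun t => x * t) (hE x x y)
  have hER1 := congrArg (fun t => t * x) (hE x x y)
  have hFL2 := congrArg (fun t => x * t) (hF x y x)
  simp only [mul_add, add_mul] at hFL1 hFR1 hEL1 hER1 hFL2
  linear_combination (norm := module)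
    (-1/8 : ℚ) • hFL1 + (3/8 : ℚ) • hFR1 + (1/16 : ℚ) • hEL1 + (3/16 : ℚ) • hER1
    + (1/8 : ℚ) • hF x x (x*y) + (-1/16 : ℚ) • hE x x (x*y)
    + (-3/8 : ℚ) • hF x x (y*x) + (-3/16 : ℚ) • hE x x (y*x)
    + (1/4 : ℚ) • hFL2 + (1/4 : ℚ) • hF x y (x*x) + (1/4 : ℚ) • hF x (x*y) x
end

section
/- Let A be a flexible not-necessarily-unital, not-necessarily-associative ring that is a ℚ-algebra. Then A satisfies the Jordan identity ((x*x)*y)*x = (x*x)*(y*x) for all x, y if and only if the circle product x∘y = x*y + y*x satisfies the commutative Jordan identity ((a∘a)∘b)∘a = (a∘a)∘(b∘a) for all a, b. (A flexible algebra satisfies the Jordan identity if and only if the adjoint commutative algebra A^(+) is a Jordan algebra.) -/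
/-- Linearized flexibility. -/
lemma flex_lin {A : Type*} [NonUnitalNonAssocRing A]
    (hflex : ∀ x y : A, x * y * x = x * (y * x)) (u y w : A) :
    u * y * w + w * y * u = u * (y * w) + w * (y * u) := by
  have h := hflex (u + w) y
  simp only [add_mul, mul_add] at h
  have h2 : u * y * w + w * y * u + (u * (y * u) + w * (y * w))
      = u * (y * w) + w * (y * u) + (u * (y * u) + w * (y * w)) := by
    linear_combination (norm := abel) h - hflex u y - hflex w y
  exact add_right_cancel h2

/-- Key identity in a flexible ring relating the circle-Jordan expression to the
Jordan associator. -/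
lemma flex_key {A : Type*} [NonUnitalNonAssocRing A]
    (hflex : ∀ x y : A, x * y * x = x * (y * x)) (x b : A) :
    x * x * b * x + b * (x * x) * x + x * (x * x * b) + x * (b * (x * x))
        + (x * x * (b * x) + x * x * (b * x) + x * x * (b * x) + x * x * (b * x))
      = x * x * (b * x) + x * x * (x * b) + b * x * (x * x) + x * b * (x * x)
        + (x * x * b * x + x * x * b * x + x * x * b * x + x * x * b * x) := by
  have h1 := flex_lin hflex (x * x) b x
  have h2 := flex_lin hflex b (x * x) x
  have h3 := flex_lin hflex (x * x) x b
  have h4 := flex_lin hflex x x (x * b)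
  have h5 := hflex x (b * x)
  have h6 := congrArg (· * x) (hflex x b)
  have h7 := congrArg (· * b) (hflex x x)
  have h8 := congrArg (b * ·) (hflex x x)
  have h9 : x * (x * x * b) + x * (b * x * x) = x * (x * (x * b)) + x * (b * (x * x)) := by
    rw [← mul_add, ← mul_add, flex_lin hflex x x b]
  linear_combination (norm := abel)
    h2 + h7 + h8 - h1 - h1 - h1 - h3 - h4 - h4 + h5 + h5 + h6 + h6 + h9 + h9

/-- A flexible ℚ-algebra satisfies the Jordan identity if and only if its
adjoint commutative algebra `A⁽⁺⁾` (with the circle product) is a Jordan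
algebra. -/
theorem jordan_iff_plus_jordan {A : Type*} [NonUnitalNonAssocRing A]
    [Module ℚ A] [SMulCommClass ℚ A A] [IsScalarTower ℚ A A]
    (hflex : ∀ x y : A, x * y * x = x * (y * x)) :
    (∀ x y : A, x * x * y * x = x * x * (y * x)) ↔
      (∀ a b : A, circ (circ (circ a a) b) a = circ (circ a a) (circ b a)) := by
  constructor
  · intro hJ a c
    have k := flex_key hflex a c
    rw [hJ a c] at k
    have hE := add_right_cancel k
    simp only [circ, add_mul, mul_add]
    linear_combination (norm := abel) hE + hE + hJ a c + hJ a c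
  · intro hC x b
    have k := flex_key hflex x b
    have hc := hC x b
    simp only [circ, add_mul, mul_add] at hc
    have h8 : (8 : ℤ) • (x * x * b * x) = (8 : ℤ) • (x * x * (b * x)) := by
      linear_combination (norm := abel) hc - k - k
    have h9 : (8 : ℚ) • (x * x * b * x) = (8 : ℚ) • (x * x * (b * x)) := by
      rw [show ((8 : ℚ)) = ((8 : ℤ) : ℚ) by norm_num, Int.cast_smul_eq_zsmul, Int.cast_smul_eq_zsmul]
      exact h8
    have h10 := congrArg (((8 : ℚ)⁻¹) • ·) h9
    simpa [smul_smul] using h10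
end

section
/- Let R be a commutative ring, A a commutative R-algebra, and D : A → A an R-linear derivation. If a in A satisfies D(D(a)) = 0, then for every natural number n, the n-fold iterate of D applied to a^n equals n! • (D a)^n, i.e. D^[n](a^n) = (n)! • (D a)^n. (This is the computation [⋯[u^i,y],…,y] = i![u,y]^i used in the proof of Theorem 3.4.) -/
private lemma iterate_derivation_pow_aux {R A : Type*} [CommRing R] [CommRing A] [Algebra R A]
    (D : Derivation R A A) (a : A) (h : D (D a) = 0) (n : ℕ) :
    ∀ k : ℕ, (⇑D)^[k] (a ^ n) = n.descFactorial k • (a ^ (n - k) * (D a) ^ k) := by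
  intro k
  induction k with
  | zero => simp
  | succ k ih =>
    rw [Function.iterate_succ_apply', ih, map_nsmul, Derivation.leibniz,
      Derivation.leibniz_pow, Derivation.leibniz_pow, h]
    simp only [smul_zero, mul_zero, zero_add, Nat.descFactorial_succ]
    simp only [smul_eq_mul]
    rw [mul_smul_comm, smul_smul, Nat.mul_comm, Nat.sub_sub]
    congr 1
    ring

/-- If `D` is a derivation of a commutative algebra and `D(D(a)) = 0`, then
`D^[n](aⁿ) = n! • (D a)ⁿ` for all `n`. -/
theorem iterate_derivation_pow {R A : Type*} [CommRing R] [CommRing A] [Algebra R A]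
    (D : Derivation R A A) (a : A) (h : D (D a) = 0) :
    ∀ n : ℕ, (⇑D)^[n] (a ^ n) = n.factorial • (D a) ^ n := by
  intro n
  rw [iterate_derivation_pow_aux D a h n n, Nat.sub_self, pow_zero, one_mul,
    Nat.descFactorial_self]
end

section
/- (Lemma 3.3, monomial form) Let A be a type equipped with a multiplication. For every n ≥ 1 and every element w of the free magma on A whose length is at least 2^n, the evaluation of w in A (extending the identity map on generators) can be written as a₀ acted on by a chain of n multiplication operators: there exist a₀, b₁, …, bₙ in A and a choice ε₁, …, εₙ of sides (each 'left' or 'right') such that eval(w) = T_{bₙ}(⋯T_{b₂}(T_{b₁}(a₀))⋯), where T_{b}(u) = b*u if the corresponding side is 'left' and T_{b}(u) = u*b if it is 'right'. -/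
/-- Lemma 3.3 (monomial form): every element of the free magma on `A` of
length at least `2ⁿ` evaluates in `A` to `a₀` acted on by a chain of `n`
left/right multiplication operators. -/
theorem eval_eq_chain_of_length_ge {A : Type*} [Mul A] :
    ∀ n : ℕ, 1 ≤ n → ∀ w : FreeMagma A, 2 ^ n ≤ w.length →
      ∃ (a₀ : A) (l : List (Bool × A)), l.length = n ∧
        FreeMagma.lift (id : A → A) w =
          l.foldl (fun u p => if p.1 then p.2 * u else u * p.2) a₀ := by
  intro n
  induction n with
  | zero => omega
  | succ n ih =>
    intro _ w hw
    match n, ih with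
    | 0, _ =>
      cases w with
      | of a => simp [FreeMagma.length] at hw
      | mul u v =>
        exact ⟨FreeMagma.lift id u, [(false, FreeMagma.lift id v)], rfl, by simp⟩
    | (m+1), ih =>
      cases w with
      | of a =>
        have h1 : (FreeMagma.of a).length = 1 := rfl
        have h2 : 0 < 2 ^ m := Nat.two_pow_pos m
        omega
      | mul u v =>
        simp [FreeMagma.length] at hw
        have hp : 2 ^ (m + 1 + 1) = 2 ^ (m + 1) + 2 ^ (m + 1) := by ring
        have hsplit : 2 ^ (m + 1) ≤ u.length ∨ 2 ^ (m + 1) ≤ v.length := by omega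
        cases hsplit with
        | inl h =>
          obtain ⟨a₀, l, hl, he⟩ := ih (by omega) u h
          refine ⟨a₀, l ++ [(false, FreeMagma.lift id v)], by simp [hl], ?_⟩
          simp [List.foldl_append, ← he]
        | inr h =>
          obtain ⟨a₀, l, hl, he⟩ := ih (by omega) v h
          refine ⟨a₀, l ++ [(true, FreeMagma.lift id u)], by simp [hl], ?_⟩
          simp [List.foldl_append, ← he]
end

section
/- (Lemma 3.4) Let F be a field of characteristic 0 and A a unital not-necessarily-associative F-algebra which is: simple (A is nontrivial and its only two-sided ideals are 0 and A); flexible ((x*y)*x = x*(y*x) for all x,y); quadratic over F (for every a in A there exist t, n in F with a*a = t•a - n•1); and which satisfies, for some fixed n ≥ 1 and m ≥ 1, the identities that the left-normed n-th power of every associator (x,y,z) is 0 and the left-normed m-th power of every commutator [x,y] is 0. Then A is commutative and associative, and the dimension of A over F is at most 2. -/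
open Polynomial

def lnpow {A : Type*} [Mul A] (a : A) : ℕ → A
  | 0 => a
  | 1 => a
  | k + 2 => lnpow a (k + 1) * a


lemma poly_dvd_aux {F : Type*} [Field F] (t ν : F) (m : ℕ) (hm : 1 ≤ m)
    (h : (X ^ 2 - C t * X + C ν : F[X]) ∣ X ^ m) : t = 0 ∧ ν = 0 := by
  set q : F[X] := X ^ 2 - C t * X + C ν with hq
  have hqm : q.Monic := by rw [hq]; monicity!
  have hdeg : q.natDegree = 2 := by rw [hq]; compute_degree!
  obtain ⟨i, him, hass⟩ := (dvd_prime_pow Polynomial.prime_X m).mp h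
  obtain ⟨u, hu⟩ := hass.symm
  obtain ⟨r, hr, hCr⟩ := Polynomial.isUnit_iff.mp u.isUnit
  have hr0 : r ≠ 0 := hr.ne_zero
  have hqeq : q = X ^ i * C r := by rw [← hu, hCr]
  have hi2 : i = 2 := by
    have h2 := congrArg Polynomial.natDegree hqeq
    rw [hdeg, Polynomial.natDegree_mul (pow_ne_zero _ Polynomial.X_ne_zero) (by simp [hr0]),
      Polynomial.natDegree_X_pow, Polynomial.natDegree_C] at h2
    omega
  have hr1 : r = 1 := by
    have := congrArg Polynomial.leadingCoeff hqeq
    rw [hqm.leadingCoeff, hi2, Polynomial.leadingCoeff_mul, Polynomial.leadingCoeff_X_pow,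
      Polynomial.leadingCoeff_C, one_mul] at this
    exact this.symm
  have hqX2 : q = X ^ 2 := by rw [hqeq, hi2, hr1, map_one, mul_one]
  constructor
  · have := congrArg (fun p => Polynomial.coeff p 1) hqX2
    simpa [hq, Polynomial.coeff_X_pow] using this
  · have := congrArg (fun p => Polynomial.coeff p 0) hqX2
    simpa [hq, Polynomial.coeff_X_pow] using this

section Aux
variable {F A : Type*} [Field F] [CharZero F] [NonAssocRing A]
    [Module F A] [SMulCommClass F A A] [IsScalarTower F A A] [Nontrivial A]

lemma aux_smul_one_eq_zero {c : F} (h : c • (1 : A) = 0) : c = 0 := by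
  by_contra hc
  have h1 : (1 : A) = 0 := by
    have := congrArg (fun x => c⁻¹ • x) h
    simpa [smul_smul, inv_mul_cancel₀ hc] using this
  exact one_ne_zero h1

lemma lnpow_succ (a : A) (k : ℕ) (hk : 1 ≤ k) : lnpow a (k + 1) = lnpow a k * a := by
  obtain ⟨j, rfl⟩ := Nat.exists_eq_add_of_le' hk
  rfl

lemma lnpow_smul_one (c : F) (m : ℕ) (hm : 1 ≤ m) :
    lnpow (c • (1 : A)) m = (c ^ m) • 1 := by
  induction m with
  | zero => omega
  | succ k ih =>
    rcases Nat.lt_or_ge k 1 with hk | hk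
    · interval_cases k
      simp [lnpow, pow_one]
    · rw [lnpow_succ _ _ hk, ih hk, smul_mul_smul_comm, one_mul, ← pow_succ]

lemma nil_quad {c : A} {t ν : F} (hq : c * c = t • c - ν • 1) {m : ℕ} (hm : 1 ≤ m)
    (h0 : lnpow c m = 0) : c * c = 0 ∧ (c = 0 ∨ (t = 0 ∧ ν = 0)) := by
  by_cases hc : ∃ μ : F, c = μ • (1 : A)
  · obtain ⟨μ, rfl⟩ := hc
    rw [lnpow_smul_one μ m hm] at h0
    have : μ ^ m = 0 := aux_smul_one_eq_zero h0
    have hμ : μ = 0 := pow_eq_zero_iff (by omega) |>.mp this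
    subst hμ
    simp
  · push_neg at hc
    -- coefficient sequence: P k corresponds to exponent k+1
    set P : ℕ → F × F := fun k =>
      Nat.rec ((1 : F), (0 : F)) (fun _ pr => (t * pr.1 + pr.2, -ν * pr.1)) k with hP
    have key : ∀ k : ℕ, lnpow c (k + 1) = (P k).1 • c + (P k).2 • 1 ∧
        ∃ h : F[X], X ^ (k + 1) =
          (X ^ 2 - C t * X + C ν) * h + C (P k).1 * X + C (P k).2 := by
      intro k
      induction k with
      | zero =>
        constructor
        · simp [lnpow, hP]
        · exact ⟨0, by simp [hP]⟩
      | succ j ih =>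
        obtain ⟨ih1, h, ih2⟩ := ih
        have hPs : P (j + 1) = (t * (P j).1 + (P j).2, -ν * (P j).1) := rfl
        constructor
        · rw [lnpow_succ _ _ (by omega), ih1, hPs]
          rw [add_mul, smul_mul_assoc, smul_mul_assoc, one_mul, hq]
          rw [smul_sub, smul_smul, smul_smul]
          module
        · refine ⟨h * X + C (P j).1, ?_⟩
          rw [hPs]
          simp only [map_add, map_mul, map_neg]
          have expand : (X : F[X]) ^ (j + 1 + 1) = X ^ (j + 1) * X := by ring
          rw [expand, ih2]
          ring
    obtain ⟨k, rfl⟩ := Nat.exists_eq_add_of_le' hm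
    obtain ⟨h1, h, h2⟩ := key k
    rw [h1] at h0
    -- extract coefficients
    have hp1 : (P k).1 = 0 := by
      by_contra hp
      apply hc ((-(P k).2) / (P k).1)
      have := congrArg (fun x => ((P k).1)⁻¹ • x) h0
      simp only [smul_add, smul_smul, inv_mul_cancel₀ hp, one_smul, smul_zero] at this
      have hc' : c = -(((P k).1⁻¹ * (P k).2) • (1 : A)) := by
        rw [eq_neg_iff_add_eq_zero]; exact this
      rw [hc', div_eq_inv_mul]
      module
    have hp2 : (P k).2 = 0 := by
      rw [hp1, zero_smul, zero_add] at h0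
      exact aux_smul_one_eq_zero h0
    rw [hp1, hp2] at h2
    simp only [map_zero, zero_mul, add_zero] at h2
    have hdvd : (X ^ 2 - C t * X + C ν : F[X]) ∣ X ^ (k + 1) := ⟨h, h2⟩
    have := poly_dvd_aux t ν (k + 1) (by omega) hdvd
    refine ⟨?_, Or.inr this⟩
    rw [hq, this.1, this.2, zero_smul, zero_smul, sub_zero]

lemma aux_smul_one_inj {c d : F} (h : c • (1 : A) = d • (1 : A)) : c = d := by
  have h0 : (c - d) • (1 : A) = 0 := by rw [sub_smul, h, sub_self]
  have h2 := aux_smul_one_eq_zero h0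
  linear_combination h2

lemma quad_uniq {a : A} (ha : ∀ μ : F, a ≠ μ • 1) {t ν t' ν' : F}
    (h : a * a = t • a - ν • 1) (h' : a * a = t' • a - ν' • 1) : t = t' ∧ ν = ν' := by
  have he : (t - t') • a - (ν - ν') • (1 : A) = 0 := by
    rw [sub_smul, sub_smul]
    linear_combination (norm := module) h.symm.trans h'
  have ht : t = t' := by
    by_contra htn
    apply ha ((ν - ν') / (t - t'))
    have h1 : (t - t') ≠ 0 := sub_ne_zero.mpr htn
    have := congrArg (fun x => (t - t')⁻¹ • x) he
    simp only [smul_sub, smul_smul, inv_mul_cancel₀ h1, one_smul, smul_zero] at this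
    rw [div_eq_inv_mul, ← sub_eq_zero]
    exact this
  refine ⟨ht, ?_⟩
  rw [ht, sub_self, zero_smul, zero_sub, neg_eq_zero] at he
  exact sub_eq_zero.mp (aux_smul_one_eq_zero he)

variable (T N : A → F)
variable (hP1 : ∀ a : A, a * a = T a • a - N a • (1 : A))
variable (hP2 : ∀ μ : F, T (μ • (1 : A)) = 2 * μ)

include hP1 hP2 in
lemma T_combo (a : A) (μ ν : F) : T (μ • (1 : A) + ν • a) = 2 * μ + ν * T a := by
  by_cases ha : ∃ lam : F, a = lam • (1 : A)
  · obtain ⟨lam, rfl⟩ := ha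
    have : μ • (1 : A) + ν • lam • 1 = (μ + ν * lam) • 1 := by
      rw [smul_smul]; module
    rw [this, hP2, hP2]; ring
  · push_neg at ha
    by_cases hν : ν = 0
    · subst hν
      simp only [zero_smul, add_zero, zero_mul]
      rw [hP2]
    · set b := μ • (1 : A) + ν • a with hb
      have hbn : ∀ lam : F, b ≠ lam • (1 : A) := by
        intro lam hbe
        apply ha ((lam - μ) / ν)
        have : ν • a = (lam - μ) • (1 : A) := by
          rw [sub_smul, ← hbe, hb]; module
        have := congrArg (fun x => ν⁻¹ • x) this
        simp only [smul_smul, inv_mul_cancel₀ hν, one_smul] at this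
        rw [this, div_eq_inv_mul, mul_smul]
      have hbsq : b * b = (2 * μ + ν * T a) • b -
          (μ * μ + μ * ν * T a + ν * ν * N a) • (1 : A) := by
        rw [hb]
        simp only [add_mul, mul_add, smul_mul_assoc, mul_smul_comm, one_mul, mul_one,
          hP1 a, smul_sub, smul_smul]
        module
      exact (quad_uniq hbn (hP1 b) hbsq).1

include hP1 hP2 in
lemma T_add (a b : A) : T (a + b) = T a + T b := by
  by_cases ha : ∃ lam : F, a = lam • (1 : A)
  · obtain ⟨lam, rfl⟩ := ha
    have h1 : lam • (1 : A) + b = lam • 1 + (1 : F) • b := by module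
    rw [h1, T_combo T N hP1 hP2, hP2]; ring
  by_cases hb : ∃ lam μ : F, b = lam • (1 : A) + μ • a
  · obtain ⟨lam, μ, rfl⟩ := hb
    have h1 : a + (lam • (1 : A) + μ • a) = lam • 1 + (1 + μ) • a := by module
    rw [h1, T_combo T N hP1 hP2, T_combo T N hP1 hP2]; ring
  · push_neg at ha hb
    -- independence
    have hind : ∀ α β γ : F, α • (1 : A) + β • a + γ • b = 0 → α = 0 ∧ β = 0 ∧ γ = 0 := by
      intro α β γ hcomb
      have hγ : γ = 0 := by
        by_contra hγ
        apply hb (-(γ⁻¹ * α)) (-(γ⁻¹ * β))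
        have := congrArg (fun x => γ⁻¹ • x) hcomb
        simp only [smul_add, smul_smul, smul_zero] at this
        rw [inv_mul_cancel₀ hγ, one_smul] at this
        linear_combination (norm := module) this
      subst hγ
      have hβ : β = 0 := by
        by_contra hβ
        apply ha (-(β⁻¹ * α))
        have := congrArg (fun x => β⁻¹ • x) hcomb
        simp only [zero_smul, add_zero, smul_add, smul_smul, smul_zero,
          inv_mul_cancel₀ hβ, one_smul] at this
        linear_combination (norm := module) this
      subst hβ
      simp only [zero_smul, add_zero] at hcomb
      exact ⟨aux_smul_one_eq_zero hcomb, rfl, rfl⟩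
    have hsq : (a + b) * (a + b) + (a - b) * (a - b) = (2 : F) • (a * a) + (2 : F) • (b * b) := by
      simp only [add_mul, mul_add, sub_mul, mul_sub]
      module
    rw [hP1 (a + b), hP1 (a - b), hP1 a, hP1 b] at hsq
    have hkey : (2 * N a + 2 * N b - N (a + b) - N (a - b)) • (1 : A)
        + (T (a + b) + T (a - b) - 2 * T a) • a
        + (T (a + b) - T (a - b) - 2 * T b) • b = 0 := by
      linear_combination (norm := module) hsq
    obtain ⟨-, e1, e2⟩ := hind _ _ _ hkey
    linear_combination (e1 + e2) / 2

end Aux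

/-- Lemma 3.4: a simple flexible quadratic algebra over a field of
characteristic 0 satisfying identities `(x,y,z)ⁿ = 0` and `[x,y]ᵐ = 0`
is commutative and associative of dimension at most 2. -/
theorem simple_quadratic_flexible_nil_assoc_comm {F A : Type*}
    [Field F] [CharZero F] [NonAssocRing A]
    [Module F A] [SMulCommClass F A A] [IsScalarTower F A A]
    [Nontrivial A]
    (hsimple : ∀ S : AddSubgroup A,
      (∀ a ∈ S, ∀ x : A, x * a ∈ S ∧ a * x ∈ S) → S = ⊥ ∨ S = ⊤)
    (hflex : ∀ x y : A, x * y * x = x * (y * x))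
    (hquad : ∀ a : A, ∃ t n : F, a * a = t • a - n • (1 : A))
    (n m : ℕ) (hn : 1 ≤ n) (hm : 1 ≤ m)
    (hassoc : ∀ x y z : A, lnpow (x * y * z - x * (y * z)) n = 0)
    (hcomm : ∀ x y : A, lnpow (x * y - y * x) m = 0) :
    (∀ x y : A, x * y = y * x) ∧
    (∀ x y z : A, x * y * z = x * (y * z)) ∧
    Module.rank F A ≤ 2 := by
  classical
  have h2 : (2 : F) ≠ 0 := two_ne_zero
  -- construct trace and norm
  have hex : ∀ a : A, ∃ p : F × F, a * a = p.1 • a - p.2 • (1 : A) ∧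
      ∀ μ : F, a = μ • (1 : A) → p = (2 * μ, μ * μ) := by
    intro a
    by_cases ha : ∃ μ : F, a = μ • (1 : A)
    · obtain ⟨μ, rfl⟩ := ha
      refine ⟨(2 * μ, μ * μ), ?_, ?_⟩
      · have h1 : (μ • (1 : A)) * (μ • (1 : A)) = (μ * μ) • (1 : A) := by
          rw [smul_mul_smul_comm, one_mul]
        rw [h1]; module
      · intro μ' he
        have := aux_smul_one_inj he
        rw [this]
    · obtain ⟨t, ν, h⟩ := hquad a
      exact ⟨(t, ν), h, fun μ he => absurd ⟨μ, he⟩ ha⟩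
  obtain ⟨T, N, hP1, hP2, hNP2⟩ :
      ∃ T N : A → F, (∀ a : A, a * a = T a • a - N a • (1 : A)) ∧
        (∀ μ : F, T (μ • (1 : A)) = 2 * μ) ∧ (∀ μ : F, N (μ • (1 : A)) = μ * μ) := by
    choose P hP1' hP2' using hex
    refine ⟨fun a => (P a).1, fun a => (P a).2, hP1', ?_, ?_⟩
    · intro μ
      show (P (μ • (1 : A))).1 = 2 * μ
      rw [hP2' (μ • (1 : A)) μ rfl]
    · intro μ
      show (P (μ • (1 : A))).2 = μ * μ
      rw [hP2' (μ • (1 : A)) μ rfl]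
  have hTadd := T_add T N hP1 hP2
  have hTcombo := T_combo T N hP1 hP2
  have hTsmul : ∀ (ν : F) (a : A), T (ν • a) = ν * T a := by
    intro ν a
    have := hTcombo a 0 ν
    simpa using this
  have hT1 : T 1 = 2 := by have := hP2 1; simpa using this
  have hT0 : T 0 = 0 := by have := hP2 0; simpa using this
  have hN0 : N 0 = 0 := by have := hNP2 0; simpa using this
  -- nil conditions
  have hC : ∀ x y : A, (x * y - y * x) * (x * y - y * x) = 0 ∧ T (x * y - y * x) = 0 := by
    intro x y
    obtain ⟨h1, h2⟩ := nil_quad (hP1 (x * y - y * x)) hm (hcomm x y)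
    rcases h2 with hc0 | ⟨ht, hν⟩
    · rw [hc0]; exact ⟨by simp, hT0⟩
    · exact ⟨h1, ht⟩
  have hN_V : ∀ x : A, T x = 0 → x * x = (-(N x)) • (1 : A) := by
    intro x hx
    rw [hP1 x, hx, zero_smul, zero_sub, neg_smul]
  -- the symmetric bilinear form (defined via N)
  obtain ⟨S, hSdef⟩ : ∃ S' : A → A → F, S' = fun u v => N u + N v - N (u + v) :=
    ⟨_, rfl⟩
  have hS : ∀ u v : A, T u = 0 → T v = 0 → u * v + v * u = S u v • (1 : A) := by
    intro u v hu hv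
    have huv : T (u + v) = 0 := by rw [hTadd, hu, hv]; ring
    have e := hN_V (u + v) huv
    have expand : (u + v) * (u + v) = u * u + (u * v + v * u) + v * v := by
      simp only [mul_add, add_mul]; abel
    rw [expand, hN_V u hu, hN_V v hv] at e
    have h4 : u * v + v * u = (N u + N v - N (u + v)) • (1 : A) := by
      linear_combination (norm := module) e
    rw [hSdef]
    exact h4
  have hSsymm : ∀ u v : A, S u v = S v u := by
    intro u v; rw [hSdef]; simp only; rw [add_comm v u]; ring
  have hSaddL : ∀ u v w : A, T u = 0 → T v = 0 → T w = 0 →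
      S (u + v) w = S u w + S v w := by
    intro u v w hu hv hw
    apply aux_smul_one_inj (F := F) (A := A)
    have huv : T (u + v) = 0 := by rw [hTadd, hu, hv]; ring
    rw [← hS _ _ huv hw, add_smul, ← hS _ _ hu hw, ← hS _ _ hv hw]
    simp only [add_mul, mul_add]; abel
  have hSsmulL : ∀ (lam : F) (u v : A), T u = 0 → T v = 0 →
      S (lam • u) v = lam * S u v := by
    intro lam u v hu hv
    apply aux_smul_one_inj (F := F) (A := A)
    have hlu : T (lam • u) = 0 := by rw [hTsmul, hu]; ring
    rw [← hS _ _ hlu hv, mul_smul, ← hS _ _ hu hv]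
    simp only [smul_mul_assoc, mul_smul_comm, smul_add]
  have hSnegL : ∀ u v : A, T u = 0 → T v = 0 → S (-u) v = -(S u v) := by
    intro u v hu hv
    have := hSsmulL (-1) u v hu hv
    rw [neg_one_smul] at this
    rw [this]; ring
  have hS0L : ∀ v : A, S 0 v = 0 := by
    intro v; rw [hSdef]; simp only [hN0, zero_add]; ring
  -- the cross product
  obtain ⟨cross, hcrossdef⟩ :
      ∃ c' : A → A → A, c' = fun u v => (2 : F)⁻¹ • (u * v - v * u) := ⟨_, rfl⟩
  have hcrossT : ∀ u v : A, T (cross u v) = 0 := by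
    intro u v
    rw [hcrossdef]
    simp only
    rw [hTsmul, (hC u v).2]; ring
  have hcross_sq : ∀ u v : A, cross u v * cross u v = 0 := by
    intro u v
    rw [hcrossdef]
    simp only
    rw [smul_mul_assoc, mul_smul_comm, (hC u v).1, smul_zero, smul_zero]
  have hScross_self : ∀ u v : A, S (cross u v) (cross u v) = 0 := by
    intro u v
    have e := hS _ _ (hcrossT u v) (hcrossT u v)
    rw [hcross_sq, add_zero] at e
    exact aux_smul_one_eq_zero e.symm
  have hcross_anti : ∀ u v : A, cross v u = -cross u v := by
    intro u v
    rw [hcrossdef]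
    simp only
    rw [← smul_neg, neg_sub]
  have hcross_addL : ∀ u v w : A, cross (u + v) w = cross u w + cross v w := by
    intro u v w
    rw [hcrossdef]
    simp only
    rw [← smul_add]
    congr 1
    simp only [add_mul, mul_add]; abel
  have hmulV : ∀ u v : A, T u = 0 → T v = 0 →
      u * v = ((2:F)⁻¹ * S u v) • (1 : A) + cross u v := by
    intro u v hu hv
    have e := hS u v hu hv
    have h21 : ((2:F)⁻¹ * 2) = 1 := inv_mul_cancel₀ h2
    have h1 : u * v = (2 : F)⁻¹ • ((u * v + v * u) + (u * v - v * u)) := by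
      rw [show (u * v + v * u) + (u * v - v * u) = (2 : F) • (u * v) from by
        rw [two_smul]; abel]
      rw [smul_smul, h21, one_smul]
    rw [h1, e, smul_add, smul_smul, hcrossdef]
  -- flexibility: S (cross u v) u = 0
  have hflexS : ∀ u v : A, T u = 0 → T v = 0 → S (cross u v) u = 0 := by
    intro u v hu hv
    have e1 := hmulV u v hu hv
    have e2 := hmulV v u hv hu
    rw [hSsymm v u, hcross_anti u v] at e2
    have hf := hflex u v
    rw [e1, e2] at hf
    simp only [add_mul, mul_add, smul_mul_assoc, mul_smul_comm, one_mul, mul_one,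
      mul_neg] at hf
    have hz : cross u v * u + u * cross u v = 0 := by
      linear_combination (norm := module) hf
    have e3 := hS (cross u v) u (hcrossT u v) hu
    rw [hz] at e3
    exact aux_smul_one_eq_zero e3.symm
  have hSaddR : ∀ u v w : A, T u = 0 → T v = 0 → T w = 0 →
      S u (v + w) = S u v + S u w := by
    intro u v w hu hv hw
    rw [hSsymm, hSaddL v w u hv hw hu, hSsymm v u, hSsymm w u]
  have hSsmulR : ∀ (lam : F) (u v : A), T u = 0 → T v = 0 →
      S u (lam • v) = lam * S u v := by
    intro lam u v hu hv
    rw [hSsymm, hSsmulL lam v u hv hu, hSsymm v u]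
  -- 1-3 antisymmetry and cyclicity of S (cross u v) w
  have hphi13 : ∀ u v w : A, T u = 0 → T v = 0 → T w = 0 →
      S (cross u v) w = -(S (cross w v) u) := by
    intro u v w hu hv hw
    have huw : T (u + w) = 0 := by rw [hTadd, hu, hw]; ring
    have h0 := hflexS (u + w) v huw hv
    rw [hcross_addL] at h0
    rw [hSaddL _ _ _ (hcrossT u v) (hcrossT w v) huw] at h0
    rw [hSaddR _ _ _ (hcrossT u v) hu hw, hSaddR _ _ _ (hcrossT w v) hu hw] at h0
    rw [hflexS u v hu hv, hflexS w v hw hv] at h0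
    linear_combination h0
  have hcyc : ∀ u v w : A, T u = 0 → T v = 0 → T w = 0 →
      S (cross u v) w = S (cross v w) u := by
    intro u v w hu hv hw
    rw [hphi13 u v w hu hv hw, hcross_anti v w,
      hSnegL (cross v w) u (hcrossT v w) hu, neg_neg]
  -- the radical is an ideal
  set R : AddSubgroup A :=
    { carrier := {x | T x = 0 ∧ ∀ v : A, T v = 0 → S x v = 0}
      zero_mem' := ⟨hT0, fun v _ => hS0L v⟩
      add_mem' := by
        rintro x y ⟨hx1, hx2⟩ ⟨hy1, hy2⟩
        refine ⟨by rw [hTadd, hx1, hy1]; ring, fun v hv => ?_⟩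
        rw [hSaddL x y v hx1 hy1 hv, hx2 v hv, hy2 v hv]; ring
      neg_mem' := by
        rintro x ⟨hx1, hx2⟩
        have hx1' : T (-x) = 0 := by
          rw [show -x = (-1 : F) • x from (neg_one_smul F x).symm, hTsmul, hx1]; ring
        refine ⟨hx1', fun v hv => ?_⟩
        rw [hSnegL x v hx1 hv, hx2 v hv]; ring } with hRdef
  have hmemR : ∀ x : A, x ∈ R ↔ T x = 0 ∧ ∀ v : A, T v = 0 → S x v = 0 := by
    intro x; rw [hRdef]; exact Iff.rfl
  have hTdecomp : ∀ a : A, T (a - ((2:F)⁻¹ * T a) • 1) = 0 := by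
    intro a
    have h1 : a - ((2:F)⁻¹ * T a) • 1 = (-((2:F)⁻¹ * T a)) • (1:A) + (1:F) • a := by
      module
    rw [h1, hTcombo]
    have h21 : (2:F) * (2:F)⁻¹ = 1 := mul_inv_cancel₀ h2
    linear_combination (T a) * h21
  have hRideal : ∀ x ∈ R, ∀ a : A, a * x ∈ R ∧ x * a ∈ R := by
    intro x hx a
    obtain ⟨hTx, hSx⟩ := (hmemR x).mp hx
    set μ := (2:F)⁻¹ * T a with hμ
    set v := a - μ • 1 with hv
    have hTv : T v = 0 := hTdecomp a
    have ha : a = μ • 1 + v := by rw [hv]; abel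
    have hvx : v * x = cross v x := by
      rw [hmulV v x hTv hTx, hSsymm v x, hSx v hTv, mul_zero, zero_smul, zero_add]
    have hxv : x * v = -cross v x := by
      rw [hmulV x v hTx hTv, hSx v hTv, mul_zero, zero_smul, zero_add, hcross_anti v x]
    have hax : a * x = μ • x + cross v x := by
      conv_lhs => rw [ha]
      rw [add_mul, smul_mul_assoc, one_mul, hvx]
    have hxa : x * a = μ • x + -cross v x := by
      conv_lhs => rw [ha]
      rw [mul_add, mul_smul_comm, mul_one, hxv]
    have hScvx : ∀ w : A, T w = 0 → S (cross v x) w = 0 := by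
      intro w hw
      rw [hcyc v x w hTv hTx hw, hcyc x w v hTx hw hTv, hSsymm]
      exact hSx (cross w v) (hcrossT w v)
    have hTcvx : T (cross v x) = 0 := hcrossT v x
    constructor
    · rw [hax, hmemR]
      refine ⟨by rw [hTadd, hTsmul, hTx, hTcvx]; ring, fun w hw => ?_⟩
      have hTμx : T (μ • x) = 0 := by rw [hTsmul, hTx]; ring
      rw [hSaddL _ _ _ hTμx hTcvx hw, hSsmulL μ x w hTx hw, hSx w hw, hScvx w hw]; ring
    · rw [hxa, hmemR]
      have hTneg : T (-cross v x) = 0 := by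
        rw [show -cross v x = (-1:F) • cross v x from (neg_one_smul F _).symm, hTsmul,
          hTcvx]; ring
      refine ⟨by rw [hTadd, hTsmul, hTx, hTneg]; ring, fun w hw => ?_⟩
      have hTμx : T (μ • x) = 0 := by rw [hTsmul, hTx]; ring
      rw [hSaddL _ _ _ hTμx hTneg hw, hSsmulL μ x w hTx hw, hSx w hw,
        hSnegL _ _ hTcvx hw, hScvx w hw]; ring
  have hRcases := hsimple R (fun a ha x => ⟨(hRideal a ha x).1, (hRideal a ha x).2⟩)
  have hnondeg : ∀ x : A, T x = 0 → (∀ v : A, T v = 0 → S x v = 0) → x = 0 := by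
    intro x h1 h2'
    rcases hRcases with hbot | htop
    · have : x ∈ R := (hmemR x).mpr ⟨h1, h2'⟩
      rw [hbot] at this
      exact AddSubgroup.mem_bot.mp this
    · exfalso
      have h1R : (1 : A) ∈ R := by rw [htop]; trivial
      have := ((hmemR 1).mp h1R).1
      rw [hT1] at this
      exact h2 this
  -- norm vs form on trace-zero elements
  have hSuuNu : ∀ u : A, T u = 0 → S u u = -(2 * N u) := by
    intro u hu
    have e := hS u u hu hu
    rw [hN_V u hu] at e
    have h1 : (-(2 * N u)) • (1:A) = S u u • (1:A) := by
      rw [← e]; module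
    exact (aux_smul_one_inj h1).symm
  -- the key relation from nil associators
  have hrel : ∀ u w : A, T u = 0 → T w = 0 →
      S u u * (S u u * S w w - S u w * S u w) = 0 := by
    intro u w hu hw
    set c := cross u w with hc
    set z := cross u c with hz
    have hTc : T c = 0 := hcrossT u w
    have hTz : T z = 0 := hcrossT u c
    have hSuc : S u c = 0 := by rw [hSsymm]; exact hflexS u w hu hw
    have hD : u * u * w - u * (u * w) =
        (-(N u)) • w + (-((2:F)⁻¹ * S u w)) • u + (-(1:F)) • z := by
      rw [hN_V u hu, hmulV u w hu hw]
      rw [mul_add, mul_smul_comm, mul_one, hmulV u c hu hTc, hSuc, mul_zero, zero_smul,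
        zero_add]
      rw [smul_mul_assoc, one_mul, ← hz]
      module
    obtain ⟨hDsq, -⟩ := nil_quad (hP1 (u * u * w - u * (u * w))) hn (hassoc u u w)
    have hTD : T (u * u * w - u * (u * w)) = 0 := by
      rw [hD, hTadd, hTadd, hTsmul, hTsmul, hTsmul, hu, hw, hTz]; ring
    have hSDD : S (u * u * w - u * (u * w)) (u * u * w - u * (u * w)) = 0 := by
      have e := hS _ _ hTD hTD
      rw [hDsq, add_zero] at e
      exact aux_smul_one_eq_zero e.symm
    -- expand S D D
    have hSzz : S z z = 0 := hScross_self u c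
    have hSuz : S u z = 0 := by rw [hSsymm]; exact hflexS u c hu hTc
    have hSwz : S w z = 0 := by
      rw [hSsymm w z, hz, hcyc u c w hu hTc hw, hcyc c w u hTc hw hu,
        show cross w u = -c from by rw [hcross_anti u w, hc],
        hSnegL c c hTc hTc, hc, hScross_self u w, neg_zero]
    have hSSS : ∀ (α β : F) (p q : A), T p = 0 → T q = 0 →
        S (α • p) (β • q) = α * β * S p q := by
      intro α β p q hp hq
      have hq' : T (β • q) = 0 := by rw [hTsmul, hq]; ring
      rw [hSsmulL α p (β • q) hp hq', hSsmulR β p q hp hq]; ring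
    set α := -(N u) with hα
    set β := -((2:F)⁻¹ * S u w) with hβ
    set γ := -(1:F) with hγ
    have hTa1 : T (α • w) = 0 := by rw [hTsmul, hw]; ring
    have hTa2 : T (β • u) = 0 := by rw [hTsmul, hu]; ring
    have hTa3 : T (γ • z) = 0 := by rw [hTsmul, hTz]; ring
    have hTa12 : T (α • w + β • u) = 0 := by rw [hTadd, hTa1, hTa2]; ring
    have hTD' : T (α • w + β • u + γ • z) = 0 := by rw [hTadd, hTa12, hTa3]; ring
    have hexp : S (u * u * w - u * (u * w)) (u * u * w - u * (u * w)) =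
        α * α * S w w + 2 * (α * β) * S u w + β * β * S u u := by
      rw [hD]
      rw [hSaddL _ _ _ hTa12 hTa3 hTD', hSaddL _ _ _ hTa1 hTa2 hTD']
      rw [hSaddR _ _ _ hTa1 hTa12 hTa3, hSaddR _ _ _ hTa1 hTa1 hTa2]
      rw [hSaddR _ _ _ hTa2 hTa12 hTa3, hSaddR _ _ _ hTa2 hTa1 hTa2]
      rw [hSaddR _ _ _ hTa3 hTa12 hTa3, hSaddR _ _ _ hTa3 hTa1 hTa2]
      rw [hSSS α α w w hw hw, hSSS α β w u hw hu, hSSS α γ w z hw hTz,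
        hSSS β α u w hu hw, hSSS β β u u hu hu, hSSS β γ u z hu hTz,
        hSSS γ α z w hTz hw, hSSS γ β z u hTz hu, hSSS γ γ z z hTz hTz]
      rw [hSzz, hSuz, hSwz, hSsymm w u, hSsymm z w, hSsymm z u]
      rw [hSuz, hSwz]
      ring
    have E : α * α * S w w + 2 * (α * β) * S u w + β * β * S u u = 0 := by
      rw [← hexp]; exact hSDD
    have hNu : N u = -((2:F)⁻¹ * S u u) := by
      rw [hSuuNu u hu]
      ring
    rw [hα, hβ, hNu] at E
    linear_combination 4 * E
  -- find spanning element
  have hbasis : ∃ e : A, T e = 0 ∧ ∀ x : A, ∃ a b : F, x = a • (1:A) + b • e := by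
    by_cases hani : ∃ e : A, T e = 0 ∧ S e e ≠ 0
    · obtain ⟨e, hTe, hSe⟩ := hani
      refine ⟨e, hTe, fun x => ?_⟩
      set v := x - ((2:F)⁻¹ * T x) • 1 with hv
      have hTv : T v = 0 := hTdecomp x
      set ρ := S e v / S e e with hρ
      have hperp0 : ∀ p : A, T p = 0 → S e p = 0 → S p p = 0 := by
        intro p hp hep
        have h3 := hrel e p hTe hp
        rw [hep] at h3
        have h4 : S e e * S e e * S p p = 0 := by linear_combination h3
        rcases mul_eq_zero.mp h4 with h5 | h5
        · exact absurd (by rcases mul_eq_zero.mp h5 with h6 | h6 <;> exact h6) hSe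
        · exact h5
      have hperp : ∀ p q : A, T p = 0 → T q = 0 → S e p = 0 → S e q = 0 →
          S p q = 0 := by
        intro p q hp hq hep heq
        have hpq : T (p + q) = 0 := by rw [hTadd, hp, hq]; ring
        have h3 : S e (p + q) = 0 := by rw [hSaddR e p q hTe hp hq, hep, heq]; ring
        have h4 := hperp0 (p + q) hpq h3
        rw [hSaddL p q (p+q) hp hq hpq, hSaddR p p q hp hp hq,
          hSaddR q p q hq hp hq] at h4
        rw [hperp0 p hp hep, hperp0 q hq heq, hSsymm q p] at h4
        linear_combination h4 / 2
      have hρe : T (ρ • e) = 0 := by rw [hTsmul, hTe]; ring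
      have hvρ : T (v - ρ • e) = 0 := by
        rw [sub_eq_add_neg, hTadd, hTv,
          show -(ρ • e) = (-ρ) • e from by module, hTsmul, hTe]; ring
      have hSev' : S e (v - ρ • e) = 0 := by
        rw [sub_eq_add_neg, hSaddR e v _ hTe hTv (by rw [show -(ρ • e) = (-ρ) • e from by module, hTsmul, hTe]; ring),
          show -(ρ • e) = (-ρ) • e from by module, hSsmulR (-ρ) e e hTe hTe, hρ]
        field_simp
        ring
      have hzero : v - ρ • e = 0 := by
        apply hnondeg _ hvρ
        intro w hw
        set τ := S e w / S e e with hτ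
        have hτe : T (τ • e) = 0 := by rw [hTsmul, hTe]; ring
        have hwτ : T (w - τ • e) = 0 := by
          rw [sub_eq_add_neg, hTadd, hw,
            show -(τ • e) = (-τ) • e from by module, hTsmul, hTe]; ring
        have hSew' : S e (w - τ • e) = 0 := by
          rw [sub_eq_add_neg, hSaddR e w _ hTe hw (by rw [show -(τ • e) = (-τ) • e from by module, hTsmul, hTe]; ring),
            show -(τ • e) = (-τ) • e from by module, hSsmulR (-τ) e e hTe hTe, hτ]
          field_simp
          ring
        have hw_split : w = (w - τ • e) + τ • e := by abel
        rw [hw_split, hSaddR _ _ _ hvρ hwτ hτe]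
        rw [hperp _ _ hvρ hwτ hSev' hSew']
        rw [hSsmulR τ _ e hvρ hTe]
        rw [sub_eq_add_neg, hSaddL v _ e hTv (by rw [show -(ρ • e) = (-ρ) • e from by module, hTsmul, hTe]; ring) hTe,
          show -(ρ • e) = (-ρ) • e from by module, hSsmulL (-ρ) e e hTe hTe, hρ,
          hSsymm v e]
        field_simp
        ring
      refine ⟨(2:F)⁻¹ * T x, ρ, ?_⟩
      have hveq : v = ρ • e := by
        have := sub_eq_zero.mp hzero; exact this
      rw [← hveq, hv]; abel
    · push_neg at hani
      refine ⟨0, hT0, fun x => ?_⟩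
      set v := x - ((2:F)⁻¹ * T x) • 1 with hv
      have hTv : T v = 0 := hTdecomp x
      have hvzero : v = 0 := by
        apply hnondeg _ hTv
        intro w hw
        have hvw : T (v + w) = 0 := by rw [hTadd, hTv, hw]; ring
        have h4 := hani (v + w) hvw
        rw [hSaddL v w (v+w) hTv hw hvw, hSaddR v v w hTv hTv hw,
          hSaddR w v w hw hTv hw] at h4
        rw [hani v hTv, hani w hw, hSsymm w v] at h4
        linear_combination h4 / 2
      refine ⟨(2:F)⁻¹ * T x, 0, ?_⟩
      rw [zero_smul, add_zero]
      have : v = 0 := hvzero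
      rw [hv] at this
      exact sub_eq_zero.mp this
  obtain ⟨e, hTe, hb⟩ := hbasis
  have hee : e * e = (-(N e)) • (1:A) := hN_V e hTe
  have hmulcomm : ∀ x y : A, x * y = y * x := by
    intro x y
    obtain ⟨a, b, hx⟩ := hb x
    obtain ⟨p, q, hy⟩ := hb y
    rw [hx, hy]
    simp only [add_mul, mul_add, smul_mul_assoc, mul_smul_comm, one_mul, mul_one,
      hee, smul_smul]
    module
  refine ⟨hmulcomm, ?_, ?_⟩
  · intro x y z
    obtain ⟨a, b, hx⟩ := hb x
    obtain ⟨p, q, hy⟩ := hb y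
    obtain ⟨r, s, hz⟩ := hb z
    rw [hx, hy, hz]
    simp only [add_mul, mul_add, smul_mul_assoc, mul_smul_comm, one_mul, mul_one,
      hee, smul_smul, smul_add]
    module
  · have hspan : Submodule.span F ({1, e} : Set A) = ⊤ := by
      rw [Submodule.eq_top_iff']
      intro x
      obtain ⟨a, b, hx⟩ := hb x
      rw [hx]
      exact add_mem
        (Submodule.smul_mem _ _ (Submodule.subset_span (by simp)))
        (Submodule.smul_mem _ _ (Submodule.subset_span (by simp)))
    have h1 : Module.rank F A = Module.rank F (Submodule.span F ({1, e} : Set A)) := by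
      rw [hspan, rank_top]
    rw [h1]
    refine le_trans (rank_span_le _) ?_
    refine le_trans Cardinal.mk_insert_le ?_
    rw [Cardinal.mk_singleton]
    exact le_of_eq one_add_one_eq_two
end
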